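/- Suppose essinf ξ = 0, F is differentiable in a neighborhood of 0, and liminf_{x→0+} x F'(x)/F(x) > 0. If λ>0 satisfies E[I(λξ)ξ]=a for some a>0, then E[u(I(λξ))]<+∞; consequently Problem (P_a) is well-posed (V(a)<+∞) and admits the unique (up to a.s. equality) optimal solution X*=I(λξ). -/

import Mathlib

open MeasureTheory Filter Set
open scoped ENNReal

noncomputable def Vval {Ω : Type*} [MeasurableSpace Ω] (P : Measure Ω)
    (ξ : Ω → ℝ) (u : ℝ → ℝ) (a : ℝ) : ℝ≥0∞ :=
  ⨆ (X : Ω → ℝ) (_ : Measurable X) (_ : ∀ᵐ ω ∂P, 0 ≤ X ω)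
    (_ : ∫⁻ ω, ENNReal.ofReal (X ω * ξ ω) ∂P = ENNReal.ofReal a),
    ∫⁻ ω, ENNReal.ofReal (u (X ω)) ∂P

/-- `X` is an optimal solution of Problem (P_a): it is feasible (measurable,
nonnegative a.s., satisfying the budget constraint `E[Xξ] = a`) and its expected
utility dominates that of every feasible solution. -/
def IsOptimal {Ω : Type*} [MeasurableSpace Ω] (P : Measure Ω)
    (ξ : Ω → ℝ) (u : ℝ → ℝ) (a : ℝ) (X : Ω → ℝ) : Prop :=
  Measurable X ∧ (∀ᵐ ω ∂P, 0 ≤ X ω) ∧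
    (∫⁻ ω, ENNReal.ofReal (X ω * ξ ω) ∂P = ENNReal.ofReal a) ∧
    ∀ Y : Ω → ℝ, Measurable Y → (∀ᵐ ω ∂P, 0 ≤ Y ω) →
      (∫⁻ ω, ENNReal.ofReal (Y ω * ξ ω) ∂P = ENNReal.ofReal a) →
      ∫⁻ ω, ENNReal.ofReal (u (Y ω)) ∂P ≤ ∫⁻ ω, ENNReal.ofReal (u (X ω)) ∂P

/-- `fLag P ξ I lam = E[I(λξ)ξ]`, the function whose equation `f(λ) = a`
determines the Lagrange multiplier. -/
noncomputable def fLag {Ω : Type*} [MeasurableSpace Ω] (P : Measure Ω)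
    (ξ : Ω → ℝ) (I : ℝ → ℝ) (lam : ℝ) : ℝ≥0∞ :=
  ∫⁻ ω, ENNReal.ofReal (I (lam * ξ ω) * ξ ω) ∂P

open scoped Topology
open intervalIntegral

lemma tangent_le {u : ℝ → ℝ} (hconc : ConcaveOn ℝ (Set.Ici (0:ℝ)) u) {z x d : ℝ}
    (hz : 0 < z) (hx : 0 ≤ x) (hd : HasDerivAt u d z) :
    u x ≤ u z + d * (x - z) := by
  rcases lt_trichotomy x z with h | h | h
  · have hs := hconc.le_slope_of_hasDerivAt (Set.mem_Ici.2 hx) (Set.mem_Ici.2 hz.le) h hd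
    rw [slope_def_field, le_div_iff₀ (by linarith)] at hs
    nlinarith
  · simp [h]
  · have hs := hconc.slope_le_of_hasDerivAt (Set.mem_Ici.2 hz.le) (Set.mem_Ici.2 hx) h hd
    rw [slope_def_field, div_le_iff₀ (by linarith)] at hs
    nlinarith


lemma tangent_lt {u : ℝ → ℝ} (hconc : StrictConcaveOn ℝ (Set.Ici (0:ℝ)) u) {z x d : ℝ}
    (hz : 0 < z) (hx : 0 ≤ x) (hne : x ≠ z) (hd : HasDerivAt u d z) :
    u x < u z + d * (x - z) := by
  rcases lt_trichotomy x z with h | h | h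
  · have hs := hconc.lt_slope_of_hasDerivAt (Set.mem_Ici.2 hx) (Set.mem_Ici.2 hz.le) h hd
    rw [slope_def_field, lt_div_iff₀ (by linarith)] at hs
    nlinarith
  · exact absurd h hne
  · have hs := hconc.slope_lt_of_hasDerivAt (Set.mem_Ici.2 hz.le) (Set.mem_Ici.2 hx) h hd
    rw [slope_def_field, div_lt_iff₀ (by linarith)] at hs
    nlinarith


lemma riemann_bound {u u' I : ℝ → ℝ} {lam s₀ w : ℝ}
    (hconc : ConcaveOn ℝ (Set.Ici (0:ℝ)) u)
    (hu_deriv : ∀ x : ℝ, 0 < x → HasDerivAt u (u' x) x)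
    (hI_pos : ∀ y : ℝ, 0 < y → 0 < I y)
    (hI_right : ∀ y : ℝ, 0 < y → u' (I y) = y)
    (hIanti : ∀ ⦃y₁ y₂ : ℝ⦄, 0 < y₁ → y₁ ≤ y₂ → I y₂ ≤ I y₁)
    (hlam : 0 < lam) (hw : 0 < w) (hws : w ≤ s₀) :
    u (I (lam * w)) ≤ u (I (lam * s₀)) + lam * w * I (lam * w)
      + lam * ∫ s in w..s₀, I (lam * s) := by
  set g : ℝ → ℝ := fun s => I (lam * s) with hg
  have hs₀ : 0 < s₀ := lt_of_lt_of_le hw hws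
  have hIls : ∀ s : ℝ, 0 < s → 0 < g s := fun s hs => hI_pos _ (mul_pos hlam hs)
  have hganti : ∀ {s t : ℝ}, 0 < s → s ≤ t → g t ≤ g s := by
    intro s t hs hst
    exact hIanti (mul_pos hlam hs) (by nlinarith)
  have hgint : ∀ p q : ℝ, 0 < p → 0 < q → IntervalIntegrable g volume p q := by
    intro p q hp hq
    refine AntitoneOn.intervalIntegrable ?_
    intro a ha b hb hab
    have h0 : 0 < min p q := lt_min hp hq
    exact hganti (lt_of_lt_of_le h0 ha.1) hab
  have key : ∀ s t : ℝ, 0 < s → s ≤ t →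
      u (g s) - lam * s * g s ≤
        (u (g t) - lam * t * g t) + lam * (t - s) * g s := by
    intro s t hs hst
    have ht : 0 < t := lt_of_lt_of_le hs hst
    have hA : 0 < g s := hIls s hs
    have hB : 0 < g t := hIls t ht
    have hd : HasDerivAt u (lam * t) (g t) := by
      have := hu_deriv _ hB
      rwa [hg, hI_right _ (mul_pos hlam ht)] at this
    have := tangent_le hconc hB hA.le hd
    nlinarith
  rcases eq_or_lt_of_le hws with rfl | hlt
  · simp only [intervalIntegral.integral_same, mul_zero]
    nlinarith [mul_pos (mul_pos hlam hw) (hIls w hw)]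
  have main : ∀ n : ℕ, 0 < n →
      u (g w) - lam * w * g w ≤ (u (g s₀) - lam * s₀ * g s₀)
        + lam * ((s₀ - w)/(n:ℝ) * g w + ∫ s in w..s₀, g s) := by
    intro n hn
    set h : ℝ := (s₀ - w)/(n:ℝ) with hh
    have hnR : (0:ℝ) < n := by exact_mod_cast hn
    have hh0 : 0 < h := div_pos (by linarith) hnR
    set t : ℕ → ℝ := fun k => w + k * h with ht
    have ht0 : t 0 = w := by simp [ht]
    have htn : t n = s₀ := by
      simp only [ht, hh]
      field_simp
      ring
    have htstep : ∀ k : ℕ, t (k+1) - t k = h := by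
      intro k; simp only [ht]; push_cast; ring
    have htpos : ∀ k : ℕ, 0 < t k := by
      intro k
      have : 0 ≤ (k:ℝ) * h := mul_nonneg (Nat.cast_nonneg k) hh0.le
      simp only [ht]; linarith
    have htmono : ∀ k : ℕ, t k < t (k+1) := by
      intro k; have := htstep k; linarith
    have htle : ∀ k : ℕ, k ≤ n → t k ≤ s₀ := by
      intro k hk
      have : (k:ℝ) * h ≤ (n:ℝ) * h := by
        apply mul_le_mul_of_nonneg_right _ hh0.le
        exact_mod_cast hk
      have h2 : t n = s₀ := htn
      simp only [ht] at h2 ⊢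
      linarith
    have tele : ∀ k : ℕ, k ≤ n →
        u (g w) - lam * w * g w ≤ (u (g (t k)) - lam * t k * g (t k))
          + lam * h * ∑ j ∈ Finset.range k, g (t j) := by
      intro k
      induction k with
      | zero => intro _; simp [ht0]
      | succ m ih =>
        intro hm
        have h1 := ih (le_of_lt (Nat.lt_of_succ_le hm))
        have h2 := key (t m) (t (m+1)) (htpos m) (htmono m).le
        rw [htstep m] at h2
        rw [Finset.sum_range_succ]
        nlinarith
    have tn := tele n le_rfl
    rw [htn] at tn
    -- bound the sum
    obtain ⟨m, rfl⟩ : ∃ m, n = m + 1 := ⟨n - 1, (Nat.succ_pred_eq_of_pos hn).symm⟩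
    have sumb : h * ∑ j ∈ Finset.range (m+1), g (t j) ≤ h * g w + ∫ s in w..s₀, g s := by
      rw [Finset.sum_range_succ']
      have step : ∀ j, j < m → h * g (t (j+1)) ≤ ∫ s in (t j)..(t (j+1)), g s := by
        intro j hj
        have hint := hgint (t j) (t (j+1)) (htpos j) (htpos (j+1))
        have hc : ∫ s in (t j)..(t (j+1)), (fun _ => g (t (j+1))) s = h * g (t (j+1)) := by
          rw [intervalIntegral.integral_const, smul_eq_mul, htstep j]
        rw [← hc]
        apply intervalIntegral.integral_mono_on (htmono j).le
          (intervalIntegrable_const) hint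
        intro s hs
        exact hganti (lt_of_lt_of_le (htpos j) hs.1) hs.2
      have sum2 : ∑ j ∈ Finset.range m, h * g (t (j+1)) ≤
          ∑ j ∈ Finset.range m, ∫ s in (t j)..(t (j+1)), g s :=
        Finset.sum_le_sum (fun j hj => step j (Finset.mem_range.1 hj))
      have adj : ∑ j ∈ Finset.range m, ∫ s in (t j)..(t (j+1)), g s
          = ∫ s in (t 0)..(t m), g s := by
        apply intervalIntegral.sum_integral_adjacent_intervals
        intro k _; exact hgint (t k) (t (k+1)) (htpos k) (htpos (k+1))
      have hrest : ∫ s in (t 0)..(t m), g s ≤ ∫ s in w..s₀, g s := by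
        rw [ht0]
        have hsplit : (∫ s in w..(t m), g s) + ∫ s in (t m)..s₀, g s = ∫ s in w..s₀, g s := by
          apply intervalIntegral.integral_add_adjacent_intervals
          · rw [← ht0]; exact hgint (t 0) (t m) (htpos 0) (htpos m)
          · exact hgint (t m) s₀ (htpos m) hs₀
        have hnn : 0 ≤ ∫ s in (t m)..s₀, g s := by
          apply intervalIntegral.integral_nonneg (htle m (Nat.le_succ m))
          intro s hs
          exact (hIls s (lt_of_lt_of_le (htpos m) hs.1)).le
        linarith
      calc h * ((∑ j ∈ Finset.range m, g (t (j+1))) + g (t 0))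
          = h * g (t 0) + ∑ j ∈ Finset.range m, h * g (t (j+1)) := by
            rw [mul_add, Finset.mul_sum]; ring
        _ ≤ h * g w + ∫ s in w..s₀, g s := by
            rw [ht0]
            have := le_trans (le_trans sum2 (le_of_eq adj)) hrest
            linarith
    have : lam * h * ∑ j ∈ Finset.range (m+1), g (t j)
        ≤ lam * (h * g w + ∫ s in w..s₀, g s) := by
      rw [mul_assoc]
      exact mul_le_mul_of_nonneg_left sumb hlam.le
    calc u (g w) - lam * w * g w
        ≤ (u (g s₀) - lam * s₀ * g s₀) + lam * h * ∑ j ∈ Finset.range (m+1), g (t j) := tn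
      _ ≤ (u (g s₀) - lam * s₀ * g s₀) + lam * (h * g w + ∫ s in w..s₀, g s) := by linarith
  have hlim : Tendsto (fun n : ℕ => (u (g s₀) - lam * s₀ * g s₀)
      + lam * ((s₀ - w)/(n:ℝ) * g w + ∫ s in w..s₀, g s)) atTop
      (𝓝 ((u (g s₀) - lam * s₀ * g s₀) + lam * (0 * g w + ∫ s in w..s₀, g s))) := by
    apply Tendsto.const_add
    apply Tendsto.const_mul
    apply Tendsto.add_const
    exact (tendsto_const_div_atTop_nhds_zero_nat (s₀ - w)).mul_const _
  have final : u (g w) - lam * w * g w ≤ (u (g s₀) - lam * s₀ * g s₀)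
      + lam * (0 * g w + ∫ s in w..s₀, g s) := by
    refine ge_of_tendsto hlim ?_
    filter_upwards [eventually_gt_atTop 0] with n hn
    exact main n hn
  have h1 : 0 ≤ lam * s₀ * g s₀ := (mul_pos (mul_pos hlam hs₀) (hIls s₀ hs₀)).le
  rw [zero_mul, zero_add] at final
  show u (g w) ≤ u (g s₀) + lam * w * g w + lam * ∫ s in w..s₀, g s
  linarith


lemma ftc_ineq {F D : ℝ → ℝ} (hFmono : Monotone F) {p q : ℝ}
    (hD : ∀ s ∈ Set.Ioo p q, HasDerivAt F (D s) s)
    (hcont : ContinuousAt F q) :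
    ∫⁻ s in Set.Ioo p q, ENNReal.ofReal (D s) ≤ ENNReal.ofReal (F q - F p) := by
  rcases le_or_gt q p with hqp | hpq
  · rw [Set.Ioo_eq_empty (by exact fun h => absurd (lt_of_lt_of_le h hqp) (lt_irrefl p)),
      Measure.restrict_empty, lintegral_zero_measure]
    exact zero_le
  have hFint : ∀ a b : ℝ, IntervalIntegrable F volume a b :=
    fun a b => (hFmono.monotoneOn _).intervalIntegrable
  have hFsint : ∀ c a b : ℝ, IntervalIntegrable (fun s => F (s + c)) volume a b := by
    intro c a b
    have : Monotone (fun s => F (s + c)) := fun x y hxy => hFmono (by linarith)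
    exact (this.monotoneOn _).intervalIntegrable
  set φ : ℕ → ℝ → ℝ := fun n s => ((n:ℝ)+1) * (F (s + 1/((n:ℝ)+1)) - F s) with hφ
  have hφnn : ∀ n s, 0 ≤ φ n s := by
    intro n s
    have h1 : (0:ℝ) < (n:ℝ)+1 := by positivity
    have h3 : (0:ℝ) < 1/((n:ℝ)+1) := by positivity
    have h2 : F s ≤ F (s + 1/((n:ℝ)+1)) := hFmono (by linarith)
    exact mul_nonneg h1.le (sub_nonneg.2 h2)
  have hφmeas : ∀ n, Measurable (fun s => ENNReal.ofReal (φ n s)) := by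
    intro n
    exact (((hFmono.measurable.comp (measurable_add_const _)).sub
      hFmono.measurable).const_mul _).ennreal_ofReal
  -- pointwise Fatou bound
  have hpt : ∀ s ∈ Set.Ioo p q, ENNReal.ofReal (D s)
      = liminf (fun n : ℕ => ENNReal.ofReal (φ n s)) atTop := by
    intro s hs
    have hslope := hasDerivAt_iff_tendsto_slope.1 (hD s hs)
    have hseq : Tendsto (fun n : ℕ => s + 1/((n:ℝ)+1)) atTop (𝓝[≠] s) := by
      apply tendsto_nhdsWithin_of_tendsto_nhds_of_eventually_within
      · have : Tendsto (fun n : ℕ => 1/((n:ℝ)+1)) atTop (𝓝 0) :=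
          tendsto_one_div_add_atTop_nhds_zero_nat
        simpa using (tendsto_const_nhds.add this)
      · filter_upwards with n
        have : (0:ℝ) < 1/((n:ℝ)+1) := by positivity
        simp only [Set.mem_compl_iff, Set.mem_singleton_iff]
        intro h
        nlinarith [congrArg (fun x => x - s) h]
    have hcomp := hslope.comp hseq
    have heq : ∀ n : ℕ, slope F s (s + 1/((n:ℝ)+1)) = φ n s := by
      intro n
      have h1 : (0:ℝ) < (n:ℝ)+1 := by positivity
      rw [slope_def_field, add_sub_cancel_left, div_eq_mul_inv, one_div, inv_inv, mul_comm]
      simp [hφ, one_div]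
    have hcomp' : Tendsto (fun n : ℕ => φ n s) atTop (𝓝 (D s)) := by
      refine hcomp.congr fun n => heq n
    exact ((ENNReal.continuous_ofReal.tendsto _).comp hcomp').liminf_eq.symm
  -- per-n integral bound
  have hIb : ∀ n : ℕ, ∫⁻ s in Set.Ioo p q, ENNReal.ofReal (φ n s)
      ≤ ENNReal.ofReal (F (q + 1/((n:ℝ)+1)) - F p) := by
    intro n
    set h : ℝ := 1/((n:ℝ)+1) with hh
    have hnR : (0:ℝ) < (n:ℝ)+1 := by positivity
    have hh0 : 0 < h := by positivity
    have hint : IntegrableOn (φ n) (Set.Ioo p q) := by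
      have h1 : IntervalIntegrable (φ n) volume p q := by
        apply IntervalIntegrable.const_mul
        exact (hFsint h p q).sub (hFint p q)
      have := (intervalIntegrable_iff_integrableOn_Ioc_of_le hpq.le).1 h1
      exact this.mono_set Set.Ioo_subset_Ioc_self
    rw [← ofReal_integral_eq_lintegral_ofReal hint
      (Filter.Eventually.of_forall (fun s => hφnn n s))]
    apply ENNReal.ofReal_le_ofReal
    have hIoo : ∫ s in Set.Ioo p q, φ n s = ∫ s in p..q, φ n s := by
      rw [intervalIntegral.integral_of_le hpq.le, MeasureTheory.integral_Ioc_eq_integral_Ioo]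
    rw [hIoo]
    have hsub : ∫ s in p..q, φ n s
        = ((n:ℝ)+1) * ((∫ s in p..q, F (s + h)) - ∫ s in p..q, F s) := by
      rw [← intervalIntegral.integral_sub (hFsint h p q) (hFint p q),
        ← intervalIntegral.integral_const_mul]
    rw [hsub, intervalIntegral.integral_comp_add_right]
    have hadj1 : (∫ s in p..q, F s) + ∫ s in q..(q+h), F s = ∫ s in p..(q+h), F s :=
      intervalIntegral.integral_add_adjacent_intervals (hFint p q) (hFint q (q+h))
    have hadj2 : (∫ s in p..(p+h), F s) + ∫ s in (p+h)..(q+h), F s = ∫ s in p..(q+h), F s :=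
      intervalIntegral.integral_add_adjacent_intervals (hFint p (p+h)) (hFint (p+h) (q+h))
    have hb1 : ∫ s in q..(q+h), F s ≤ h * F (q+h) := by
      have := intervalIntegral.integral_mono_on (by linarith : q ≤ q + h)
        (hFint q (q+h)) intervalIntegrable_const
        (fun s hs => hFmono hs.2 : ∀ s ∈ Set.Icc q (q+h), F s ≤ F (q+h))
      rwa [intervalIntegral.integral_const, smul_eq_mul, add_sub_cancel_left] at this
    have hb2 : h * F p ≤ ∫ s in p..(p+h), F s := by
      have := intervalIntegral.integral_mono_on (by linarith : p ≤ p + h)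
        intervalIntegrable_const (hFint p (p+h))
        (fun s hs => hFmono hs.1 : ∀ s ∈ Set.Icc p (p+h), F p ≤ F s)
      rwa [intervalIntegral.integral_const, smul_eq_mul, add_sub_cancel_left] at this
    have hmul : ((n:ℝ)+1) * h = 1 := by
      rw [hh]; field_simp
    calc ((n:ℝ)+1) * ((∫ s in (p+h)..(q+h), F s) - ∫ s in p..q, F s)
        = ((n:ℝ)+1) * ((∫ s in q..(q+h), F s) - ∫ s in p..(p+h), F s) := by
          have heq2 : (∫ s in (p+h)..(q+h), F s) - ∫ s in p..q, F s
              = (∫ s in q..(q+h), F s) - ∫ s in p..(p+h), F s := by linarith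
          rw [heq2]
      _ ≤ ((n:ℝ)+1) * (h * F (q+h) - h * F p) := by
          apply mul_le_mul_of_nonneg_left _ (by positivity)
          linarith
      _ = F (q+h) - F p := by
          have : ((n:ℝ)+1) * (h * F (q+h) - h * F p)
              = (((n:ℝ)+1)*h) * F (q+h) - (((n:ℝ)+1)*h) * F p := by ring
          rw [this, hmul, one_mul, one_mul]
  -- combine
  calc ∫⁻ s in Set.Ioo p q, ENNReal.ofReal (D s)
      = ∫⁻ s in Set.Ioo p q, liminf (fun n : ℕ => ENNReal.ofReal (φ n s)) atTop := by
        apply lintegral_congr_ae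
        filter_upwards [ae_restrict_mem measurableSet_Ioo] with s hs
        exact hpt s hs
    _ ≤ liminf (fun n : ℕ => ∫⁻ s in Set.Ioo p q, ENNReal.ofReal (φ n s)) atTop :=
        lintegral_liminf_le (fun n => hφmeas n)
    _ ≤ liminf (fun n : ℕ => ENNReal.ofReal (F (q + 1/((n:ℝ)+1)) - F p)) atTop :=
        Filter.liminf_le_liminf (Filter.Eventually.of_forall hIb)
    _ = ENNReal.ofReal (F q - F p) := by
        apply Filter.Tendsto.liminf_eq
        have hq : Tendsto (fun n : ℕ => q + 1/((n:ℝ)+1)) atTop (𝓝 q) := by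
          have : Tendsto (fun n : ℕ => 1/((n:ℝ)+1)) atTop (𝓝 0) :=
            tendsto_one_div_add_atTop_nhds_zero_nat
          simpa using (tendsto_const_nhds.add this)
        exact (ENNReal.continuous_ofReal.tendsto _).comp
          (((hcont.tendsto.comp hq).sub_const (F p)))


set_option maxHeartbeats 3000000 in
theorem wellposed_of_density_condition
    {Ω : Type*} [MeasurableSpace Ω] (P : Measure Ω) [IsProbabilityMeasure P]
    (ξ : Ω → ℝ) (hξmeas : Measurable ξ) (hξpos : ∀ᵐ ω ∂P, 0 < ξ ω)
    (u u' u'' : ℝ → ℝ) (hu_meas : Measurable u)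
    (hu0 : u 0 = 0) (hu_nonneg : ∀ x : ℝ, 0 ≤ x → 0 ≤ u x)
    (hu_mono : StrictMonoOn u (Set.Ici (0:ℝ)))
    (hu_conc : StrictConcaveOn ℝ (Set.Ici (0:ℝ)) u)
    (hu_deriv : ∀ x : ℝ, 0 < x → HasDerivAt u (u' x) x)
    (hu_deriv2 : ∀ x : ℝ, 0 < x → HasDerivAt u' (u'' x) x)
    (hu'_pos : ∀ x : ℝ, 0 < x → 0 < u' x)
    (hu'_zero : Tendsto u' (nhdsWithin 0 (Set.Ioi 0)) atTop)
    (hu'_top : Tendsto u' atTop (nhds 0))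
    (I : ℝ → ℝ) (hI_meas : Measurable I) (hI_pos : ∀ y : ℝ, 0 < y → 0 < I y)
    (hI_left : ∀ x : ℝ, 0 < x → I (u' x) = x)
    (hI_right : ∀ y : ℝ, 0 < y → u' (I y) = y)
    (F F' : ℝ → ℝ) (hF : ∀ x : ℝ, F x = (P {ω | ξ ω ≤ x}).toReal)
    (hessinf : essInf ξ P = 0)
    (hF_deriv : ∀ᶠ x in nhds (0:ℝ), HasDerivAt F (F' x) x)
    (hF_liminf : ∃ c : ℝ, 0 < c ∧ ∀ᶠ x in nhdsWithin 0 (Set.Ioi 0), c ≤ x * F' x / F x)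
    (a lam : ℝ) (ha : 0 < a) (hlam : 0 < lam)
    (hbudget : fLag P ξ I lam = ENNReal.ofReal a)
    :
    (∫⁻ ω, ENNReal.ofReal (u (I (lam * ξ ω))) ∂P < ⊤) ∧
      Vval P ξ u a < ⊤ ∧
      IsOptimal P ξ u a (fun ω => I (lam * ξ ω)) ∧
      ∀ Y : Ω → ℝ, IsOptimal P ξ u a Y → Y =ᵐ[P] fun ω => I (lam * ξ ω) := by
  classical
  have hconc : ConcaveOn ℝ (Set.Ici (0:ℝ)) u := hu_conc.concaveOn
  set X : Ω → ℝ := fun ω => I (lam * ξ ω) with hX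
  have hXmeas : Measurable X := hI_meas.comp (hξmeas.const_mul lam)
  have hXpos : ∀ᵐ ω ∂P, 0 < X ω := hξpos.mono fun ω h => hI_pos _ (mul_pos hlam h)
  have hXnn : ∀ᵐ ω ∂P, 0 ≤ X ω := hXpos.mono fun ω h => h.le
  have hbudgetX : ∫⁻ ω, ENNReal.ofReal (X ω * ξ ω) ∂P = ENNReal.ofReal a := hbudget
  have hbudget2 : ∫⁻ ω, ENNReal.ofReal (ξ ω * X ω) ∂P = ENNReal.ofReal a := by
    rw [← hbudgetX]; exact lintegral_congr fun ω => by rw [mul_comm]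
  -- u' strictly antitone on positives
  have hu'anti : ∀ x y : ℝ, 0 < x → x < y → u' y < u' x := by
    intro x y hx hxy
    have hy : 0 < y := hx.trans hxy
    have h1 := hu_conc.lt_slope_of_hasDerivAt (Set.mem_Ici.2 hx.le) (Set.mem_Ici.2 hy.le)
      hxy (hu_deriv y hy)
    have h2 := hu_conc.slope_lt_of_hasDerivAt (Set.mem_Ici.2 hx.le) (Set.mem_Ici.2 hy.le)
      hxy (hu_deriv x hx)
    linarith
  have hIanti' : ∀ ⦃y₁ y₂ : ℝ⦄, 0 < y₁ → y₁ < y₂ → I y₂ < I y₁ := by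
    intro y₁ y₂ h1 hlt
    have h2 : 0 < y₂ := h1.trans hlt
    rcases lt_trichotomy (I y₂) (I y₁) with hh | hh | hh
    · exact hh
    · exfalso
      have e1 := hI_right _ h2
      rw [hh, hI_right _ h1] at e1
      linarith
    · exfalso
      have := hu'anti _ _ (hI_pos _ h1) hh
      rw [hI_right _ h1, hI_right _ h2] at this
      linarith
  have hIanti : ∀ ⦃y₁ y₂ : ℝ⦄, 0 < y₁ → y₁ ≤ y₂ → I y₂ ≤ I y₁ := by
    intro y₁ y₂ h1 h12
    rcases eq_or_lt_of_le h12 with rfl | hlt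
    · exact le_rfl
    · exact (hIanti' h1 hlt).le
  have hIlt : ∀ s t : ℝ, 0 < s → 0 < t → (t < I (lam * s) ↔ lam * s < u' t) := by
    intro s t hs ht
    have hls : 0 < lam * s := mul_pos hlam hs
    constructor
    · intro h
      have := hu'anti t (I (lam * s)) ht h
      rwa [hI_right _ hls] at this
    · intro h
      have := hIanti' hls h
      rwa [hI_left t ht] at this
  have hd_at : ∀ ω : Ω, 0 < ξ ω → HasDerivAt u (lam * ξ ω) (X ω) := by
    intro ω hξω
    have h0 := hu_deriv _ (hI_pos _ (mul_pos hlam hξω))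
    have h1 : u' (X ω) = lam * ξ ω := hI_right _ (mul_pos hlam hξω)
    rwa [h1] at h0
  have hpwgen : ∀ Y : Ω → ℝ, (∀ᵐ ω ∂P, 0 ≤ Y ω) →
      ∀ᵐ ω ∂P, ENNReal.ofReal (u (Y ω)) + ENNReal.ofReal (lam * (ξ ω * X ω))
        ≤ ENNReal.ofReal (u (X ω)) + ENNReal.ofReal (lam * (ξ ω * Y ω)) := by
    intro Y hYnn
    filter_upwards [hξpos, hYnn] with ω hξω hYω
    have hXω : 0 < X ω := hI_pos _ (mul_pos hlam hξω)
    have ht := tangent_le hconc hXω hYω (hd_at ω hξω)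
    have hnn1 : 0 ≤ u (Y ω) := hu_nonneg _ hYω
    have hnn2 : 0 ≤ lam * (ξ ω * X ω) := by positivity
    have hnn3 : 0 ≤ u (X ω) := hu_nonneg _ hXω.le
    have hnn4 : 0 ≤ lam * (ξ ω * Y ω) := by positivity
    rw [← ENNReal.ofReal_add hnn1 hnn2, ← ENNReal.ofReal_add hnn3 hnn4]
    apply ENNReal.ofReal_le_ofReal
    nlinarith
  have hCgen : ∀ Y : Ω → ℝ, Measurable Y →
      (∫⁻ ω, ENNReal.ofReal (Y ω * ξ ω) ∂P = ENNReal.ofReal a) →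
      ∫⁻ ω, ENNReal.ofReal (lam * (ξ ω * Y ω)) ∂P
        = ENNReal.ofReal lam * ENNReal.ofReal a := by
    intro Y hYm hYb
    have hYb2 : ∫⁻ ω, ENNReal.ofReal (ξ ω * Y ω) ∂P = ENNReal.ofReal a := by
      rw [← hYb]; exact lintegral_congr fun ω => by rw [mul_comm]
    have e1 : ∀ ω, ENNReal.ofReal (lam * (ξ ω * Y ω))
        = ENNReal.ofReal lam * ENNReal.ofReal (ξ ω * Y ω) :=
      fun ω => ENNReal.ofReal_mul hlam.le
    rw [lintegral_congr e1, lintegral_const_mul _ (show Measurable fun ω => ENNReal.ofReal (ξ ω * Y ω) from (hξmeas.mul hYm).ennreal_ofReal), hYb2]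
  -- optimality
  have hopt : ∀ Y : Ω → ℝ, Measurable Y → (∀ᵐ ω ∂P, 0 ≤ Y ω) →
      (∫⁻ ω, ENNReal.ofReal (Y ω * ξ ω) ∂P = ENNReal.ofReal a) →
      ∫⁻ ω, ENNReal.ofReal (u (Y ω)) ∂P ≤ ∫⁻ ω, ENNReal.ofReal (u (X ω)) ∂P := by
    intro Y hYm hYnn hYb
    have hmeasX : Measurable fun ω => ENNReal.ofReal (lam * (ξ ω * X ω)) :=
      (((hξmeas.mul hXmeas).const_mul lam)).ennreal_ofReal
    have hmeasY : Measurable fun ω => ENNReal.ofReal (lam * (ξ ω * Y ω)) :=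
      (((hξmeas.mul hYm).const_mul lam)).ennreal_ofReal
    have h1 := lintegral_mono_ae (hpwgen Y hYnn)
    rw [lintegral_add_right _ hmeasX, lintegral_add_right _ hmeasY,
      hCgen X hXmeas hbudgetX, hCgen Y hYm hYb] at h1
    exact (ENNReal.add_le_add_iff_right
      (ENNReal.mul_ne_top ENNReal.ofReal_ne_top ENNReal.ofReal_ne_top)).1 h1
  -- finiteness
  have hfin : ∫⁻ ω, ENNReal.ofReal (u (X ω)) ∂P < ⊤ := by
    obtain ⟨c, hc, hclim⟩ := hF_liminf
    obtain ⟨δ₁, hδ₁, hFd⟩ := Metric.eventually_nhds_iff.1 hF_deriv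
    rw [eventually_nhdsWithin_iff] at hclim
    obtain ⟨δ₂, hδ₂, hFl⟩ := Metric.eventually_nhds_iff.1 hclim
    set s₀ : ℝ := min δ₁ δ₂ / 2 with hs₀def
    have hs₀pos : 0 < s₀ := div_pos (lt_min hδ₁ hδ₂) two_pos
    have hs₀δ₁ : s₀ < δ₁ := by
      have h := min_le_left δ₁ δ₂
      rw [hs₀def]; linarith
    have hs₀δ₂ : s₀ < δ₂ := by
      have h := min_le_right δ₁ δ₂
      rw [hs₀def]; linarith
    set D : ℝ → ℝ := deriv F with hDdef
    have hDmeas : Measurable D := measurable_deriv F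
    have hFmono : Monotone F := by
      intro x y hxy
      rw [hF x, hF y]
      exact ENNReal.toReal_mono (measure_ne_top P _)
        (measure_mono (fun ω (h : ξ ω ≤ x) => le_trans h hxy))
    have hFnn : ∀ x : ℝ, 0 ≤ F x := fun x => by rw [hF x]; exact ENNReal.toReal_nonneg
    have hofF : ∀ x : ℝ, ENNReal.ofReal (F x) = P {ω | ξ ω ≤ x} := by
      intro x; rw [hF x, ENNReal.ofReal_toReal (measure_ne_top P _)]
    have hDs : ∀ s : ℝ, 0 < s → s ≤ s₀ → HasDerivAt F (D s) s := by
      intro s h1 h2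
      have hd := hFd (y := s) (by rw [Real.dist_eq, sub_zero, abs_of_pos h1]; linarith)
      exact hd.differentiableAt.hasDerivAt
    have hcF : ∀ s : ℝ, 0 < s → s ≤ s₀ → c * F s ≤ s * D s := by
      intro s h1 h2
      have hd := hFd (y := s) (by rw [Real.dist_eq, sub_zero, abs_of_pos h1]; linarith)
      have hDeq : D s = F' s := hd.deriv
      have hcl : c ≤ s * F' s / F s := by
        apply hFl (y := s) (by rw [Real.dist_eq, sub_zero, abs_of_pos h1]; linarith)
        exact h1
      rcases eq_or_lt_of_le (hFnn s) with hF0 | hFpos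
      · exfalso
        rw [← hF0, div_zero] at hcl
        linarith
      · rw [le_div_iff₀ hFpos] at hcl
        rw [hDeq]
        linarith
    have hmIic : ∀ x : ℝ, MeasurableSet {ω | ξ ω ≤ x} := fun x => hξmeas measurableSet_Iic
    have hftcP : ∀ v t : ℝ, 0 ≤ v → 0 < t → t ≤ s₀ →
        ∫⁻ s in Set.Ioo v t, ENNReal.ofReal (D s) ≤ P {ω | v < ξ ω ∧ ξ ω < t} := by
      intro v t hv ht hts₀
      have hdt : HasDerivAt F (D t) t := hDs t ht hts₀
      have hcont : ContinuousAt F t := hdt.continuousAt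
      have h1 : ∫⁻ s in Set.Ioo v t, ENNReal.ofReal (D s) ≤ ENNReal.ofReal (F t - F v) := by
        apply ftc_ineq hFmono _ hcont
        intro s hs
        exact hDs s (lt_of_le_of_lt hv hs.1) (hs.2.le.trans hts₀)
      refine h1.trans ?_
      have hatom : P {ω | ξ ω = t} = 0 := by
        have hbnd : ∀ n : ℕ, P {ω | ξ ω = t}
            ≤ ENNReal.ofReal (F t - F (t - 1/((n:ℝ)+1))) := by
          intro n
          have hpos : (0:ℝ) < 1/((n:ℝ)+1) := by positivity
          have hsub : {ω | ξ ω = t} ⊆ {ω | ξ ω ≤ t} \ {ω | ξ ω ≤ t - 1/((n:ℝ)+1)} := by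
            intro ω h
            simp only [Set.mem_setOf_eq, Set.mem_diff] at *
            exact ⟨le_of_eq h, by rw [h]; intro hcon; linarith⟩
          calc P {ω | ξ ω = t}
              ≤ P ({ω | ξ ω ≤ t} \ {ω | ξ ω ≤ t - 1/((n:ℝ)+1)}) := measure_mono hsub
            _ = P {ω | ξ ω ≤ t} - P {ω | ξ ω ≤ t - 1/((n:ℝ)+1)} := by
                apply measure_diff
                · intro ω (h : ξ ω ≤ t - 1/((n:ℝ)+1)); exact le_trans h (by linarith)
                · exact (hmIic _).nullMeasurableSet
                · exact measure_ne_top P _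
            _ = ENNReal.ofReal (F t) - ENNReal.ofReal (F (t - 1/((n:ℝ)+1))) := by
                rw [hofF, hofF]
            _ = ENNReal.ofReal (F t - F (t - 1/((n:ℝ)+1))) :=
                (ENNReal.ofReal_sub _ (hFnn _)).symm
        have hlim0 : Tendsto (fun n : ℕ => ENNReal.ofReal (F t - F (t - 1/((n:ℝ)+1))))
            atTop (𝓝 0) := by
          have hseq : Tendsto (fun n : ℕ => t - 1/((n:ℝ)+1)) atTop (𝓝 t) := by
            have h2 := tendsto_one_div_add_atTop_nhds_zero_nat (𝕜 := ℝ)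
            simpa using (tendsto_const_nhds.sub h2)
          have h2 : Tendsto (fun n : ℕ => F t - F (t - 1/((n:ℝ)+1))) atTop
              (𝓝 (F t - F t)) := tendsto_const_nhds.sub (hcont.tendsto.comp hseq)
          rw [sub_self] at h2
          have h3 := (ENNReal.continuous_ofReal.tendsto _).comp h2
          simpa [Function.comp_def] using h3
        have h4 := ge_of_tendsto hlim0 (Filter.Eventually.of_forall hbnd)
        exact le_antisymm h4 zero_le
      rcases le_or_gt t v with htv | hvt
      · rw [ENNReal.ofReal_eq_zero.2 (by linarith [hFmono htv] : F t - F v ≤ 0)]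
        exact zero_le
      have h2 : ENNReal.ofReal (F t - F v) = P ({ω | ξ ω ≤ t} \ {ω | ξ ω ≤ v}) := by
        rw [ENNReal.ofReal_sub _ (hFnn v), hofF, hofF]
        refine (measure_diff ?_ ((hmIic _).nullMeasurableSet) (measure_ne_top P _)).symm
        intro ω (h : ξ ω ≤ v)
        exact le_trans h hvt.le
      rw [h2]
      have hsub2 : {ω | ξ ω ≤ t} \ {ω | ξ ω ≤ v}
          ⊆ {ω | v < ξ ω ∧ ξ ω < t} ∪ {ω | ξ ω = t} := by
        intro ω h
        simp only [Set.mem_setOf_eq, Set.mem_diff, Set.mem_union] at *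
        rcases eq_or_lt_of_le h.1 with heq | hlt2
        · exact Or.inr heq
        · exact Or.inl ⟨not_le.1 h.2, hlt2⟩
      calc P ({ω | ξ ω ≤ t} \ {ω | ξ ω ≤ v})
          ≤ P ({ω | v < ξ ω ∧ ξ ω < t} ∪ {ω | ξ ω = t}) := measure_mono hsub2
        _ ≤ P {ω | v < ξ ω ∧ ξ ω < t} + P {ω | ξ ω = t} := measure_union_le _ _
        _ = P {ω | v < ξ ω ∧ ξ ω < t} := by rw [hatom, add_zero]
    set gI : ℝ → ℝ≥0∞ := fun s => ENNReal.ofReal (I (lam * s)) with hgIdef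
    have hgImeas : Measurable gI := (hI_meas.comp (measurable_id.const_mul lam)).ennreal_ofReal
    set Jf : Ω → ℝ≥0∞ := fun ω => ∫⁻ s in Set.Ioo 0 s₀, (if ξ ω < s then gI s else 0)
      with hJfdef
    have hpath : ∀ᵐ ω ∂P, ENNReal.ofReal (u (X ω)) ≤ ENNReal.ofReal (u (I (lam * s₀)))
        + ENNReal.ofReal lam * ENNReal.ofReal (ξ ω * X ω)
        + ENNReal.ofReal lam * Jf ω := by
      filter_upwards [hξpos] with ω hξω
      have hXω : 0 < X ω := hI_pos _ (mul_pos hlam hξω)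
      have hIs₀ : 0 < I (lam * s₀) := hI_pos _ (mul_pos hlam hs₀pos)
      have hA : 0 ≤ u (I (lam * s₀)) := hu_nonneg _ hIs₀.le
      have hB : 0 ≤ lam * (ξ ω * X ω) := by positivity
      by_cases hcase : ξ ω < s₀
      · have hri := riemann_bound hconc hu_deriv hI_pos hI_right hIanti hlam hξω hcase.le
        have hIntOn : IntegrableOn (fun s => I (lam * s)) (Set.Ioo (ξ ω) s₀) volume := by
          have hAnti : AntitoneOn (fun s => I (lam * s)) (Set.uIcc (ξ ω) s₀) := by
            intro x hx y hy hxy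
            rw [Set.uIcc_of_le hcase.le] at hx
            exact hIanti (mul_pos hlam (lt_of_lt_of_le hξω hx.1)) (by nlinarith)
          have h5 : IntervalIntegrable (fun s => I (lam * s)) volume (ξ ω) s₀ :=
            hAnti.intervalIntegrable
          rw [intervalIntegrable_iff_integrableOn_Ioc_of_le hcase.le] at h5
          exact h5.mono_set Set.Ioo_subset_Ioc_self
        have hIVal : ∫ s in (ξ ω)..s₀, I (lam * s) = ∫ s in Set.Ioo (ξ ω) s₀, I (lam * s) := by
          rw [intervalIntegral.integral_of_le hcase.le,
            MeasureTheory.integral_Ioc_eq_integral_Ioo]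
        have hOfInt : ENNReal.ofReal (∫ s in Set.Ioo (ξ ω) s₀, I (lam * s))
            = ∫⁻ s in Set.Ioo (ξ ω) s₀, gI s := by
          apply ofReal_integral_eq_lintegral_ofReal hIntOn
          filter_upwards [ae_restrict_mem measurableSet_Ioo] with s hs
          exact (hI_pos _ (mul_pos hlam (lt_trans hξω hs.1))).le
        have hJω : ∫⁻ s in Set.Ioo (ξ ω) s₀, gI s = Jf ω := by
          simp only [hJfdef]
          have hind : (fun s => if ξ ω < s then gI s else 0)
              = fun s => (Set.Ioi (ξ ω)).indicator gI s := by
            funext s; by_cases h : ξ ω < s <;> simp [Set.indicator, h]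
          simp only [hind]
          have hset : Set.Ioi (ξ ω) ∩ Set.Ioo 0 s₀ = Set.Ioo (ξ ω) s₀ := by
            ext s
            simp only [Set.mem_inter_iff, Set.mem_Ioi, Set.mem_Ioo]
            constructor
            · rintro ⟨h1, _, h3⟩; exact ⟨h1, h3⟩
            · rintro ⟨h1, h2⟩; exact ⟨h1, lt_trans hξω h1, h2⟩
          rw [lintegral_indicator measurableSet_Ioi,
            Measure.restrict_restrict measurableSet_Ioi, hset]
        have hint_nn : 0 ≤ ∫ s in Set.Ioo (ξ ω) s₀, I (lam * s) := by
          apply setIntegral_nonneg measurableSet_Ioo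
          intro s hs
          exact (hI_pos _ (mul_pos hlam (lt_trans hξω hs.1))).le
        have hC : 0 ≤ lam * ∫ s in Set.Ioo (ξ ω) s₀, I (lam * s) :=
          mul_nonneg hlam.le hint_nn
        have e1 : u (X ω) ≤ u (I (lam * s₀)) + lam * (ξ ω * X ω)
            + lam * ∫ s in Set.Ioo (ξ ω) s₀, I (lam * s) := by
          rw [← hIVal]
          have hr2 : lam * (ξ ω * X ω) = lam * ξ ω * X ω := by ring
          linarith [hri, hr2]
        have e2 := ENNReal.ofReal_le_ofReal e1
        rw [ENNReal.ofReal_add (add_nonneg hA hB) hC, ENNReal.ofReal_add hA hB,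
          ENNReal.ofReal_mul hlam.le, ENNReal.ofReal_mul hlam.le, hOfInt, hJω] at e2
        exact e2
      · push_neg at hcase
        have h1 : X ω ≤ I (lam * s₀) := hIanti (mul_pos hlam hs₀pos) (by nlinarith)
        have h2 : u (X ω) ≤ u (I (lam * s₀)) :=
          hu_mono.monotoneOn (Set.mem_Ici.2 hXω.le) (Set.mem_Ici.2 hIs₀.le) h1
        exact le_trans (ENNReal.ofReal_le_ofReal h2) (le_add_right (le_add_right le_rfl))
    have hunc : Measurable (Function.uncurry fun (ω : Ω) (s : ℝ) =>
        if ξ ω < s then gI s else 0) := by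
      apply Measurable.ite
      · exact measurableSet_lt (hξmeas.comp measurable_fst) measurable_snd
      · exact hgImeas.comp measurable_snd
      · exact measurable_const
    have hJmeas : Measurable Jf := hunc.lintegral_prod_right'
    have hintX : ∫⁻ ω, ENNReal.ofReal (u (X ω)) ∂P
        ≤ ENNReal.ofReal (u (I (lam * s₀))) + ENNReal.ofReal lam * ENNReal.ofReal a
          + ENNReal.ofReal lam * ∫⁻ ω, Jf ω ∂P := by
      have h1 := lintegral_mono_ae hpath
      rw [lintegral_add_right _ (hJmeas.const_mul _),
        lintegral_add_right _ ((show Measurable fun ω => ENNReal.ofReal (ξ ω * X ω) from (hξmeas.mul hXmeas).ennreal_ofReal).const_mul _),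
        lintegral_const, measure_univ, mul_one,
        lintegral_const_mul _ (show Measurable fun ω => ENNReal.ofReal (ξ ω * X ω) from (hξmeas.mul hXmeas).ennreal_ofReal),
        lintegral_const_mul _ hJmeas, hbudget2] at h1
      exact h1
    have hswap1 : ∫⁻ ω, Jf ω ∂P = ∫⁻ s in Set.Ioo 0 s₀, gI s * P {ω | ξ ω < s} := by
      simp only [hJfdef]
      rw [lintegral_lintegral_swap hunc.aemeasurable]
      apply lintegral_congr
      intro s
      have hind : (fun ω => if ξ ω < s then gI s else 0)
          = fun ω => {ω' : Ω | ξ ω' < s}.indicator (fun _ => gI s) ω := by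
        funext ω; by_cases h : ξ ω < s <;> simp [Set.indicator, h, Set.mem_setOf_eq]
      simp only [hind]
      rw [lintegral_indicator (show MeasurableSet {ω' : Ω | ξ ω' < s} from
        hξmeas measurableSet_Iio), setLIntegral_const]
    have hchain1 : ∫⁻ s in Set.Ioo 0 s₀, gI s * P {ω | ξ ω < s}
        ≤ ∫⁻ s in Set.Ioo 0 s₀,
          ENNReal.ofReal c⁻¹ * ((gI s * ENNReal.ofReal s) * ENNReal.ofReal (D s)) := by
      apply lintegral_mono_ae
      filter_upwards [ae_restrict_mem measurableSet_Ioo] with s hs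
      have h1 : P {ω | ξ ω < s} ≤ ENNReal.ofReal (F s) := by
        rw [hofF]; exact measure_mono (fun ω (h : ξ ω < s) => h.le)
      have h2 : F s ≤ c⁻¹ * (s * D s) := by
        have h3 := hcF s hs.1 hs.2.le
        rw [inv_mul_eq_div, le_div_iff₀ hc]
        linarith
      calc gI s * P {ω | ξ ω < s}
          ≤ gI s * ENNReal.ofReal (c⁻¹ * (s * D s)) :=
            mul_le_mul_right (h1.trans (ENNReal.ofReal_le_ofReal h2)) _
        _ = ENNReal.ofReal c⁻¹ * ((gI s * ENNReal.ofReal s) * ENNReal.ofReal (D s)) := by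
            rw [ENNReal.ofReal_mul (inv_nonneg.2 hc.le), ENNReal.ofReal_mul hs.1.le]
            ring
    have hT2 : ∫⁻ s in Set.Ioo 0 s₀, (gI s * ENNReal.ofReal s) * ENNReal.ofReal (D s)
        ≤ ENNReal.ofReal a := by
      classical
      set e : ℝ → ℝ → ℝ → ℝ≥0∞ := fun s v t =>
        ((if 0 < v ∧ v < s then (1:ℝ≥0∞) else 0)
          * (if 0 < t ∧ t < I (lam * s) then (1:ℝ≥0∞) else 0)) * ENNReal.ofReal (D s)
        with hedef
      set e' : Ω → ℝ → ℝ → ℝ≥0∞ := fun ω v t =>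
        ((if 0 < v ∧ v < ξ ω then (1:ℝ≥0∞) else 0)
          * (if 0 < t ∧ t < I (lam * ξ ω) then (1:ℝ≥0∞) else 0))
          * (if ξ ω < s₀ then (1:ℝ≥0∞) else 0) with he'def
      -- measurability helpers
      have hmeas_e : Measurable (fun q : (ℝ × ℝ) × ℝ => e q.1.1 q.1.2 q.2) := by
        simp only [hedef]
        refine Measurable.mul (Measurable.mul ?_ ?_) ?_
        · refine Measurable.ite ?_ measurable_const measurable_const
          exact (measurableSet_lt measurable_const measurable_fst.snd).inter
            (measurableSet_lt measurable_fst.snd measurable_fst.fst)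
        · refine Measurable.ite ?_ measurable_const measurable_const
          exact (measurableSet_lt measurable_const measurable_snd).inter
            (measurableSet_lt measurable_snd
              ((hI_meas.comp (measurable_id.const_mul lam)).comp measurable_fst.fst))
        · exact (hDmeas.comp measurable_fst.fst).ennreal_ofReal
      have hmeas_e' : Measurable (fun q : (Ω × ℝ) × ℝ => e' q.1.1 q.1.2 q.2) := by
        simp only [he'def]
        refine Measurable.mul (Measurable.mul ?_ ?_) ?_
        · refine Measurable.ite ?_ measurable_const measurable_const
          exact (measurableSet_lt measurable_const measurable_fst.snd).inter
            (measurableSet_lt measurable_fst.snd (hξmeas.comp measurable_fst.fst))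
        · refine Measurable.ite ?_ measurable_const measurable_const
          exact (measurableSet_lt measurable_const measurable_snd).inter
            (measurableSet_lt measurable_snd
              ((hI_meas.comp ((hξmeas.comp measurable_fst.fst).const_mul lam))))
        · refine Measurable.ite ?_ measurable_const measurable_const
          exact measurableSet_lt (hξmeas.comp measurable_fst.fst) measurable_const
      -- step 1 : pointwise rewrite of the integrand as a double integral
      have hrw : ∀ s : ℝ, s ∈ Set.Ioo (0:ℝ) s₀ →
          (gI s * ENNReal.ofReal s) * ENNReal.ofReal (D s)
            = ∫⁻ v, ∫⁻ t, e s v t := by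
        intro s hs
        have hIpos : 0 < I (lam * s) := hI_pos _ (mul_pos hlam hs.1)
        have hti : (fun t => if 0 < t ∧ t < I (lam * s) then (1:ℝ≥0∞) else 0)
            = (Set.Ioo (0:ℝ) (I (lam * s))).indicator (fun _ => (1:ℝ≥0∞)) := by
          funext t
          by_cases h : 0 < t ∧ t < I (lam * s) <;>
            simp [Set.indicator, Set.mem_Ioo, h]
        have hvi : (fun v => if 0 < v ∧ v < s then (1:ℝ≥0∞) else 0)
            = (Set.Ioo (0:ℝ) s).indicator (fun _ => (1:ℝ≥0∞)) := by
          funext v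
          by_cases h : 0 < v ∧ v < s <;>
            simp [Set.indicator, Set.mem_Ioo, h]
        have htval : ∫⁻ t, (if 0 < t ∧ t < I (lam * s) then (1:ℝ≥0∞) else 0) = gI s := by
          rw [hti, lintegral_indicator measurableSet_Ioo, setLIntegral_const, one_mul,
            Real.volume_Ioo, sub_zero, hgIdef]
        have hvval : ∫⁻ v, (if 0 < v ∧ v < s then (1:ℝ≥0∞) else 0) = ENNReal.ofReal s := by
          rw [hvi, lintegral_indicator measurableSet_Ioo, setLIntegral_const, one_mul,
            Real.volume_Ioo, sub_zero]
        have hinner_t : ∀ v : ℝ, ∫⁻ t, e s v t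
            = ((if 0 < v ∧ v < s then (1:ℝ≥0∞) else 0) * ENNReal.ofReal (D s)) * gI s := by
          intro v
          have : ∀ t : ℝ, e s v t
              = ((if 0 < v ∧ v < s then (1:ℝ≥0∞) else 0) * ENNReal.ofReal (D s))
                * (if 0 < t ∧ t < I (lam * s) then (1:ℝ≥0∞) else 0) := by
            intro t; simp only [hedef]; ring
          rw [lintegral_congr this, lintegral_const_mul' _ _
            (ENNReal.mul_ne_top (by split <;> simp) ENNReal.ofReal_ne_top), htval]
        rw [lintegral_congr hinner_t]
        have : ∀ v : ℝ, ((if 0 < v ∧ v < s then (1:ℝ≥0∞) else 0) * ENNReal.ofReal (D s)) * gI s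
            = (if 0 < v ∧ v < s then (1:ℝ≥0∞) else 0) * (ENNReal.ofReal (D s) * gI s) := by
          intro v; ring
        rw [lintegral_congr this, lintegral_mul_const' _ _
          (ENNReal.mul_ne_top ENNReal.ofReal_ne_top
            (by simp only [hgIdef]; exact ENNReal.ofReal_ne_top)), hvval]
        ring
      -- step 2 : rewrite and swap twice
      have hstep2 : ∫⁻ s in Set.Ioo 0 s₀, (gI s * ENNReal.ofReal s) * ENNReal.ofReal (D s)
          = ∫⁻ v, ∫⁻ t, ∫⁻ s in Set.Ioo 0 s₀, e s v t := by
        rw [setLIntegral_congr_fun measurableSet_Ioo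
          hrw]
        rw [lintegral_lintegral_swap (f := fun s v => ∫⁻ t, e s v t)
          (show AEMeasurable (Function.uncurry fun s v => ∫⁻ t, e s v t)
              ((volume.restrict (Set.Ioo (0:ℝ) s₀)).prod volume) from
            (hmeas_e.lintegral_prod_right').aemeasurable)]
        apply lintegral_congr
        intro v
        rw [lintegral_lintegral_swap (f := fun s t => e s v t)
          (show AEMeasurable (Function.uncurry fun s t => e s v t)
              ((volume.restrict (Set.Ioo (0:ℝ) s₀)).prod volume) from
            (hmeas_e.comp ((measurable_fst.prodMk measurable_const).prodMk
              measurable_snd)).aemeasurable)]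
      -- step 3 : inner FTC bound, for fixed v t
      have hinner : ∀ v t : ℝ, (∫⁻ s in Set.Ioo 0 s₀, e s v t)
          ≤ ∫⁻ ω, e' ω v t ∂P := by
        intro v t
        by_cases hv : 0 < v
        · by_cases ht : 0 < t
          · set q := min s₀ (u' t / lam) with hqdef
            have hq0 : 0 < q := lt_min hs₀pos (div_pos (hu'_pos t ht) hlam)
            have hqs₀ : q ≤ s₀ := min_le_left _ _
            have hiff : ∀ s : ℝ, 0 < s → s < s₀ →
                (((0 < v ∧ v < s) ∧ (0 < t ∧ t < I (lam * s))) ↔ (v < s ∧ s < q)) := by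
              intro s hs hss₀
              constructor
              · rintro ⟨⟨_, h1⟩, ⟨_, h2⟩⟩
                refine ⟨h1, lt_min hss₀ ?_⟩
                have h3 := (hIlt s t hs ht).1 h2
                rw [lt_div_iff₀ hlam]
                linarith
              · rintro ⟨h1, h2⟩
                have hsq := lt_of_lt_of_le h2 (min_le_right _ _)
                rw [lt_div_iff₀ hlam] at hsq
                exact ⟨⟨hv, h1⟩, ht, (hIlt s t hs ht).2 (by linarith)⟩
            have hstep : ∫⁻ s in Set.Ioo 0 s₀, e s v t
                = ∫⁻ s in Set.Ioo v q, ENNReal.ofReal (D s) := by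
              have hcg : ∀ᵐ s ∂(volume.restrict (Set.Ioo (0:ℝ) s₀)),
                  e s v t = (Set.Ioo v q).indicator (fun s => ENNReal.ofReal (D s)) s := by
                filter_upwards [ae_restrict_mem measurableSet_Ioo] with s hs
                by_cases hmem : s ∈ Set.Ioo v q
                · rw [Set.indicator_of_mem hmem]
                  have h4 := (hiff s hs.1 hs.2).2 hmem
                  simp only [hedef, if_pos h4.1, if_pos h4.2, one_mul]
                · rw [Set.indicator_of_notMem hmem]
                  by_cases c1 : 0 < v ∧ v < s
                  · have c2 : ¬(0 < t ∧ t < I (lam * s)) := fun c2 =>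
                      hmem ((hiff s hs.1 hs.2).1 ⟨c1, c2⟩)
                    simp [hedef, c2]
                  · simp [hedef, c1]
              rw [lintegral_congr_ae hcg, lintegral_indicator measurableSet_Ioo,
                Measure.restrict_restrict measurableSet_Ioo]
              congr 1
              congr 1
              ext s
              simp only [Set.mem_inter_iff, Set.mem_Ioo]
              constructor
              · rintro ⟨⟨h1, h2⟩, _, _⟩; exact ⟨h1, h2⟩
              · rintro ⟨h1, h2⟩
                exact ⟨⟨h1, h2⟩, lt_trans hv h1, lt_of_lt_of_le h2 hqs₀⟩
            rw [hstep]
            refine (hftcP v q hv.le hq0 hqs₀).trans (le_of_eq ?_)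
            have hset : ∀ ω : Ω, e' ω v t
                = {ω' : Ω | v < ξ ω' ∧ ξ ω' < q}.indicator (fun _ => (1:ℝ≥0∞)) ω := by
              intro ω
              by_cases hmem : ω ∈ {ω' : Ω | v < ξ ω' ∧ ξ ω' < q}
              · have hmem' : v < ξ ω ∧ ξ ω < q := hmem
                have hξω0 : 0 < ξ ω := lt_trans hv hmem'.1
                have hξs₀ : ξ ω < s₀ := lt_of_lt_of_le hmem'.2 hqs₀
                have h4 := (hiff (ξ ω) hξω0 hξs₀).2 hmem'
                rw [Set.indicator_of_mem hmem]
                simp only [he'def, if_pos h4.1, if_pos h4.2, if_pos hξs₀, one_mul, mul_one]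
              · have hmem' : ¬(v < ξ ω ∧ ξ ω < q) := hmem
                rw [Set.indicator_of_notMem hmem]
                by_cases c0 : ξ ω < s₀
                · by_cases hξω0 : 0 < ξ ω
                  · by_cases c1 : 0 < v ∧ v < ξ ω
                    · have c2 : ¬(0 < t ∧ t < I (lam * ξ ω)) := fun c2 =>
                        hmem' ((hiff (ξ ω) hξω0 c0).1 ⟨c1, c2⟩)
                      simp [he'def, c2]
                    · simp [he'def, c1]
                  · have c1 : ¬(0 < v ∧ v < ξ ω) := fun c1 => hξω0 (lt_trans hv c1.2)
                    simp [he'def, c1]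
                · simp [he'def, c0]
            rw [lintegral_congr hset, lintegral_indicator
              (show MeasurableSet {ω' : Ω | v < ξ ω' ∧ ξ ω' < q} from
                (measurableSet_lt measurable_const hξmeas).inter
                  (measurableSet_lt hξmeas measurable_const)),
              setLIntegral_const, one_mul]
          · have h0 : ∀ s : ℝ, e s v t = 0 := by
              intro s
              have : ¬(0 < t ∧ t < I (lam * s)) := fun hcon => ht hcon.1
              simp [hedef, this]
            simp only [h0]
            simp
        · have h0 : ∀ s : ℝ, e s v t = 0 := by
            intro s
            have : ¬(0 < v ∧ v < s) := fun hcon => hv hcon.1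
            simp [hedef, this]
          simp only [h0]
          simp
      -- step 4 : unswap to an Ω-integral
      have hstep4 : ∫⁻ v, ∫⁻ t, ∫⁻ ω, e' ω v t ∂P ≤ ENNReal.ofReal a := by
        have hswA : ∀ v : ℝ, ∫⁻ t, ∫⁻ ω, e' ω v t ∂P
            = ∫⁻ ω, (∫⁻ t, e' ω v t) ∂P := by
          intro v
          rw [lintegral_lintegral_swap (f := fun t ω => e' ω v t)
            (show AEMeasurable (Function.uncurry fun t ω => e' ω v t)
                ((volume : Measure ℝ).prod P) from
              (hmeas_e'.comp ((measurable_snd.prodMk measurable_const).prodMk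
                measurable_fst)).aemeasurable)]
        have hswB : ∫⁻ v, ∫⁻ ω, (∫⁻ t, e' ω v t) ∂P
            = ∫⁻ ω, (∫⁻ v, ∫⁻ t, e' ω v t) ∂P := by
          rw [lintegral_lintegral_swap (f := fun v ω => ∫⁻ t, e' ω v t)
            (show AEMeasurable (Function.uncurry fun v ω => ∫⁻ t, e' ω v t)
                ((volume : Measure ℝ).prod P) from
              ((hmeas_e'.comp ((measurable_fst.snd.prodMk measurable_fst.fst).prodMk
                measurable_snd)).lintegral_prod_right').aemeasurable)]
        have hptω : ∀ ω : Ω, (∫⁻ v, ∫⁻ t, e' ω v t) ≤ ENNReal.ofReal (ξ ω * X ω) := by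
          intro ω
          by_cases hξs : ξ ω < s₀
          · by_cases hξ0 : 0 < ξ ω
            · have hIω : 0 < I (lam * ξ ω) := hI_pos _ (mul_pos hlam hξ0)
              have hti : (fun t => if 0 < t ∧ t < I (lam * ξ ω) then (1:ℝ≥0∞) else 0)
                  = (Set.Ioo (0:ℝ) (I (lam * ξ ω))).indicator (fun _ => (1:ℝ≥0∞)) := by
                funext t
                by_cases h : 0 < t ∧ t < I (lam * ξ ω) <;>
                  simp [Set.indicator, Set.mem_Ioo, h]
              have hvi : (fun v => if 0 < v ∧ v < ξ ω then (1:ℝ≥0∞) else 0)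
                  = (Set.Ioo (0:ℝ) (ξ ω)).indicator (fun _ => (1:ℝ≥0∞)) := by
                funext v
                by_cases h : 0 < v ∧ v < ξ ω <;>
                  simp [Set.indicator, Set.mem_Ioo, h]
              have htval : ∫⁻ t, (if 0 < t ∧ t < I (lam * ξ ω) then (1:ℝ≥0∞) else 0)
                  = ENNReal.ofReal (I (lam * ξ ω)) := by
                rw [hti, lintegral_indicator measurableSet_Ioo, setLIntegral_const,
                  one_mul, Real.volume_Ioo, sub_zero]
              have hvval : ∫⁻ v, (if 0 < v ∧ v < ξ ω then (1:ℝ≥0∞) else 0)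
                  = ENNReal.ofReal (ξ ω) := by
                rw [hvi, lintegral_indicator measurableSet_Ioo, setLIntegral_const,
                  one_mul, Real.volume_Ioo, sub_zero]
              have hte : ∀ v : ℝ, (∫⁻ t, e' ω v t)
                  = (if 0 < v ∧ v < ξ ω then (1:ℝ≥0∞) else 0)
                    * ENNReal.ofReal (I (lam * ξ ω)) := by
                intro v
                have h5 : ∀ t : ℝ, e' ω v t
                    = (if 0 < v ∧ v < ξ ω then (1:ℝ≥0∞) else 0)
                      * (if 0 < t ∧ t < I (lam * ξ ω) then (1:ℝ≥0∞) else 0) := by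
                  intro t
                  simp only [he'def, if_pos hξs, mul_one]
                rw [lintegral_congr h5, lintegral_const_mul' _ _
                  (by split <;> simp), htval]
              refine le_of_eq ?_
              calc (∫⁻ v, ∫⁻ t, e' ω v t)
                  = (∫⁻ v, (if 0 < v ∧ v < ξ ω then (1:ℝ≥0∞) else 0))
                    * ENNReal.ofReal (I (lam * ξ ω)) := by
                    rw [← lintegral_mul_const' _ _ ENNReal.ofReal_ne_top]
                    exact lintegral_congr hte
                _ = ENNReal.ofReal (ξ ω) * ENNReal.ofReal (I (lam * ξ ω)) := by
                    rw [hvval]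
                _ = ENNReal.ofReal (ξ ω * X ω) := (ENNReal.ofReal_mul hξ0.le).symm
            · have h0 : ∀ v t : ℝ, e' ω v t = 0 := by
                intro v t
                have : ¬(0 < v ∧ v < ξ ω) := fun hcon => hξ0 (lt_trans hcon.1 hcon.2)
                simp [he'def, this]
              simp only [h0]
              simp
          · have h0 : ∀ v t : ℝ, e' ω v t = 0 := by
              intro v t
              simp [he'def, hξs]
            simp only [h0]
            simp
        calc ∫⁻ v, ∫⁻ t, ∫⁻ ω, e' ω v t ∂P
            = ∫⁻ v, ∫⁻ ω, (∫⁻ t, e' ω v t) ∂P := lintegral_congr hswA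
          _ = ∫⁻ ω, (∫⁻ v, ∫⁻ t, e' ω v t) ∂P := hswB
          _ ≤ ∫⁻ ω, ENNReal.ofReal (ξ ω * X ω) ∂P := lintegral_mono hptω
          _ = ENNReal.ofReal a := hbudget2
      calc ∫⁻ s in Set.Ioo 0 s₀, (gI s * ENNReal.ofReal s) * ENNReal.ofReal (D s)
          = ∫⁻ v, ∫⁻ t, ∫⁻ s in Set.Ioo 0 s₀, e s v t := hstep2
        _ ≤ ∫⁻ v, ∫⁻ t, ∫⁻ ω, e' ω v t ∂P := by
            apply lintegral_mono; intro v
            apply lintegral_mono; intro t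
            exact hinner v t
        _ ≤ ENNReal.ofReal a := hstep4
    have hJtot : ∫⁻ ω, Jf ω ∂P ≤ ENNReal.ofReal c⁻¹ * ENNReal.ofReal a := by
      rw [hswap1]
      refine hchain1.trans ?_
      rw [lintegral_const_mul' _ _ ENNReal.ofReal_ne_top]
      exact mul_le_mul_right hT2 _
    refine lt_of_le_of_lt hintX ?_
    have hlast : ENNReal.ofReal lam * ∫⁻ ω, Jf ω ∂P
        ≤ ENNReal.ofReal lam * (ENNReal.ofReal c⁻¹ * ENNReal.ofReal a) :=
      mul_le_mul_right hJtot _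
    refine ENNReal.add_lt_top.2 ⟨ENNReal.add_lt_top.2 ⟨ENNReal.ofReal_lt_top, ?_⟩,
      lt_of_le_of_lt hlast ?_⟩
    · exact ENNReal.mul_lt_top ENNReal.ofReal_lt_top ENNReal.ofReal_lt_top
    · exact ENNReal.mul_lt_top ENNReal.ofReal_lt_top
        (ENNReal.mul_lt_top ENNReal.ofReal_lt_top ENNReal.ofReal_lt_top)
  -- uniqueness
  have huniq : ∀ Y : Ω → ℝ, IsOptimal P ξ u a Y → Y =ᵐ[P] X := by
    intro Y hYopt
    obtain ⟨hYm, hYnn, hYb, hYdom⟩ := hYopt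
    have hXY : ∫⁻ ω, ENNReal.ofReal (u (Y ω)) ∂P = ∫⁻ ω, ENNReal.ofReal (u (X ω)) ∂P :=
      le_antisymm (hopt Y hYm hYnn hYb) (hYdom X hXmeas hXnn hbudgetX)
    set f : Ω → ℝ≥0∞ := fun ω =>
      ENNReal.ofReal (u (Y ω)) + ENNReal.ofReal (lam * (ξ ω * X ω)) with hfd
    set g : Ω → ℝ≥0∞ := fun ω =>
      ENNReal.ofReal (u (X ω)) + ENNReal.ofReal (lam * (ξ ω * Y ω)) with hgd
    have hmeasX : Measurable fun ω => ENNReal.ofReal (lam * (ξ ω * X ω)) :=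
      (((hξmeas.mul hXmeas).const_mul lam)).ennreal_ofReal
    have hmeasY : Measurable fun ω => ENNReal.ofReal (lam * (ξ ω * Y ω)) :=
      (((hξmeas.mul hYm).const_mul lam)).ennreal_ofReal
    have hfmeas : Measurable f := ((hu_meas.comp hYm).ennreal_ofReal).add hmeasX
    have hgmeas : Measurable g := ((hu_meas.comp hXmeas).ennreal_ofReal).add hmeasY
    have hfint : ∫⁻ ω, f ω ∂P
        = ∫⁻ ω, ENNReal.ofReal (u (Y ω)) ∂P + ENNReal.ofReal lam * ENNReal.ofReal a := by
      rw [hfd]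
      rw [lintegral_add_right _ hmeasX, hCgen X hXmeas hbudgetX]
    have hgint : ∫⁻ ω, g ω ∂P
        = ∫⁻ ω, ENNReal.ofReal (u (X ω)) ∂P + ENNReal.ofReal lam * ENNReal.ofReal a := by
      rw [hgd]
      rw [lintegral_add_right _ hmeasY, hCgen Y hYm hYb]
    have heqi : ∫⁻ ω, f ω ∂P = ∫⁻ ω, g ω ∂P := by rw [hfint, hgint, hXY]
    have hffin : ∫⁻ ω, f ω ∂P ≠ ⊤ := by
      rw [hfint, hXY]
      exact ENNReal.add_ne_top.2 ⟨hfin.ne,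
        ENNReal.mul_ne_top ENNReal.ofReal_ne_top ENNReal.ofReal_ne_top⟩
    have hle : f ≤ᵐ[P] g := hpwgen Y hYnn
    have hsub0 : ∫⁻ ω, (g ω - f ω) ∂P = 0 := by
      rw [lintegral_sub hfmeas hffin hle, ← heqi, tsub_self]
    have hae0 : (fun ω => g ω - f ω) =ᵐ[P] 0 :=
      (lintegral_eq_zero_iff (hgmeas.sub hfmeas)).1 hsub0
    filter_upwards [hae0, hpwgen Y hYnn, hξpos, hYnn] with ω h0 hle' hξω hYω
    simp only [Pi.zero_apply] at h0
    have hgf : g ω = f ω := le_antisymm (tsub_eq_zero_iff_le.1 h0) hle'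
    have hXω : 0 < X ω := hI_pos _ (mul_pos hlam hξω)
    have hnn1 : 0 ≤ u (Y ω) := hu_nonneg _ hYω
    have hnn2 : 0 ≤ lam * (ξ ω * X ω) := by positivity
    have hnn3 : 0 ≤ u (X ω) := hu_nonneg _ hXω.le
    have hnn4 : 0 ≤ lam * (ξ ω * Y ω) := by positivity
    have hreal : u (X ω) + lam * (ξ ω * Y ω) = u (Y ω) + lam * (ξ ω * X ω) := by
      have h2 : ENNReal.ofReal (u (X ω) + lam * (ξ ω * Y ω))
          = ENNReal.ofReal (u (Y ω) + lam * (ξ ω * X ω)) := by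
        rw [ENNReal.ofReal_add hnn3 hnn4, ENNReal.ofReal_add hnn1 hnn2]
        exact hgf
      exact (ENNReal.ofReal_eq_ofReal_iff (by positivity) (by positivity)).1 h2
    show Y ω = X ω
    by_contra hne
    have hstrict := tangent_lt hu_conc hXω hYω hne (hd_at ω hξω)
    nlinarith
  refine ⟨hfin, ?_, ⟨hXmeas, hXnn, hbudgetX, hopt⟩, huniq⟩
  have hV : Vval P ξ u a ≤ ∫⁻ ω, ENNReal.ofReal (u (X ω)) ∂P := by
    apply iSup_le; intro Y
    apply iSup_le; intro hYm
    apply iSup_le; intro hYnn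
    apply iSup_le; intro hYb
    exact hopt Y hYm hYnn hYb
  exact lt_of_le_of_lt hV hfin
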